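/- Let k be a positive integer and let s = (s_1, ..., s_k) and t = (t_1, ..., t_k) be two k-tuples of nonnegative integers. The caterpillar tree induced by s is isomorphic (as a simple graph) to the caterpillar tree induced by t if and only if t = s or t is the reversal of s (i.e., t_i = s_{k-i+1} for all 1 ≤ i ≤ k). -/

import Mathlib

/-- The caterpillar tree induced by a tuple `s = (s_1, …, s_k)` of nonnegative
integers: a path `v_0, v_1, …, v_k, v_{k+1}` (vertices `Sum.inl a`, `a : Fin (k+2)`)
together with, for each `1 ≤ i ≤ k`, `s_i` leaves attached to `v_i`
(vertices `Sum.inr ⟨i, _⟩` for the leaves attached to `v_{i+1}`, 0-indexed). -/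
def inducedCaterpillar {k : ℕ} (s : Fin k → ℕ) :
    SimpleGraph (Fin (k + 2) ⊕ (Σ i : Fin k, Fin (s i))) :=
  SimpleGraph.fromRel (fun x y =>
    match x, y with
    | .inl a, .inl b => a.val + 1 = b.val
    | .inl a, .inr ⟨i, _⟩ => a.val = i.val + 1
    | _, _ => False)

section Aux

variable {k : ℕ} {s : Fin k → ℕ}

private lemma adj_inl_inl (a b : Fin (k+2)) :
    (inducedCaterpillar s).Adj (.inl a) (.inl b) ↔ (a.val + 1 = b.val ∨ b.val + 1 = a.val) := by
  simp only [inducedCaterpillar, SimpleGraph.fromRel_adj]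
  constructor
  · rintro ⟨-, h⟩; exact h
  · intro h
    refine ⟨?_, h⟩
    intro he
    injection he with he
    subst he
    omega

private lemma adj_inl_inr (a : Fin (k+2)) (i : Fin k) (j : Fin (s i)) :
    (inducedCaterpillar s).Adj (.inl a) (.inr ⟨i, j⟩) ↔ a.val = i.val + 1 := by
  simp only [inducedCaterpillar, SimpleGraph.fromRel_adj]
  constructor
  · rintro ⟨-, h | h⟩
    · exact h
    · exact h.elim
  · intro h
    exact ⟨by simp, Or.inl h⟩

private lemma adj_inr_inr (x y : Σ i : Fin k, Fin (s i)) :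
    ¬ (inducedCaterpillar s).Adj (.inr x) (.inr y) := by
  obtain ⟨i, j⟩ := x; obtain ⟨i', j'⟩ := y
  simp only [inducedCaterpillar, SimpleGraph.fromRel_adj]
  rintro ⟨-, h | h⟩ <;> exact h

private def revIso (s : Fin k → ℕ) :
    inducedCaterpillar s ≃g inducedCaterpillar (s ∘ Fin.rev) where
  toEquiv := Equiv.sumCongr (Fin.revPerm)
    (Equiv.sigmaCongr Fin.revPerm (fun a => finCongr (congrArg s (Fin.rev_rev a).symm)))
  map_rel_iff' := by
    rintro (a | ⟨i, j⟩) (b | ⟨i', j'⟩)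
    · show (inducedCaterpillar _).Adj (.inl a.rev) (.inl b.rev) ↔ _
      rw [adj_inl_inl, adj_inl_inl]
      have := a.is_lt; have := b.is_lt
      have h1 : a.rev.val = k + 1 - a.val := by rw [Fin.val_rev]; omega
      have h2 : b.rev.val = k + 1 - b.val := by rw [Fin.val_rev]; omega
      omega
    · show (inducedCaterpillar _).Adj (.inl a.rev) (.inr ⟨i'.rev, _⟩) ↔ _
      rw [adj_inl_inr]; erw [adj_inl_inr]
      have := a.is_lt; have := i'.is_lt
      have h1 : a.rev.val = k + 1 - a.val := by rw [Fin.val_rev]; omega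
      have h2 : i'.rev.val = k - 1 - i'.val := by rw [Fin.val_rev]; omega
      omega
    · show (inducedCaterpillar _).Adj (.inr ⟨i.rev, _⟩) (.inl b.rev) ↔ _
      rw [SimpleGraph.adj_comm, SimpleGraph.adj_comm _ (Sum.inr _)]
      rw [adj_inl_inr]; erw [adj_inl_inr]
      have := b.is_lt; have := i.is_lt
      have h1 : b.rev.val = k + 1 - b.val := by rw [Fin.val_rev]; omega
      have h2 : i.rev.val = k - 1 - i.val := by rw [Fin.val_rev]; omega
      omega
    · show (inducedCaterpillar _).Adj (.inr ⟨i.rev, _⟩) (.inr ⟨i'.rev, _⟩) ↔ _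
      simp [adj_inr_inr]

private lemma card_nbr (i : Fin k) :
    Nat.card ((inducedCaterpillar s).neighborSet (.inl ⟨i.val + 1, by omega⟩)) = s i + 2 := by
  have e : (Fin (s i) ⊕ Fin 2) ≃
      ((inducedCaterpillar s).neighborSet (.inl ⟨i.val + 1, by omega⟩)) := by
    refine Equiv.ofBijective (fun x => x.elim
      (fun j => ⟨.inr ⟨i, j⟩, by rw [SimpleGraph.mem_neighborSet, adj_inl_inr]⟩)
      (fun c => if c.val = 0 then ⟨.inl ⟨i.val, by omega⟩,
          by rw [SimpleGraph.mem_neighborSet, adj_inl_inl]; simp⟩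
        else ⟨.inl ⟨i.val + 2, by omega⟩,
          by rw [SimpleGraph.mem_neighborSet, adj_inl_inl]; simp⟩)) ⟨?_, ?_⟩
    · rintro (j | c) (j' | c') h <;>
        simp only [Sum.elim_inl, Sum.elim_inr] at h
      · simp only [Subtype.mk.injEq, Sum.inr.injEq, Sigma.mk.inj_iff, heq_eq_eq, true_and] at h
        rw [h]
      · split at h <;> simp at h
      · split at h <;> simp at h
      · rcases c with ⟨c, hc⟩; rcases c' with ⟨c', hc'⟩
        congr 1
        by_cases h0 : c = 0 <;> by_cases h0' : c' = 0 <;>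
          simp only [h0, h0', if_true, if_false, if_pos, if_neg, Subtype.mk.injEq,
            Sum.inl.injEq, Fin.mk.injEq] at h ⊢ <;> omega
    · rintro ⟨(a | ⟨i', j'⟩), hx⟩
      · rw [SimpleGraph.mem_neighborSet, adj_inl_inl] at hx
        simp only [Fin.val_mk] at hx
        rcases hx with h | h
        · refine ⟨.inr ⟨1, by omega⟩, ?_⟩
          simp only [Sum.elim_inr]
          rw [if_neg (by simp)]
          exact Subtype.ext (congrArg Sum.inl (Fin.ext (by simp; omega)))
        · refine ⟨.inr ⟨0, by omega⟩, ?_⟩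
          simp only [Sum.elim_inr]
          rw [if_pos trivial]
          exact Subtype.ext (congrArg Sum.inl (Fin.ext (by simp; omega)))
      · rw [SimpleGraph.mem_neighborSet, adj_inl_inr] at hx
        simp only [Fin.val_mk] at hx
        have hii : i' = i := Fin.ext (by omega)
        subst hii
        exact ⟨.inl j', rfl⟩
  rw [← Nat.card_congr e, Nat.card_sum]
  simp

private def TwoNbrs {V : Type*} (G : SimpleGraph V) (v : V) : Prop :=
  ∃ x y, x ≠ y ∧ G.Adj v x ∧ G.Adj v y

private lemma twoNbrs_iff (hk : 0 < k) (v : Fin (k + 2) ⊕ (Σ i : Fin k, Fin (s i))) :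
    TwoNbrs (inducedCaterpillar s) v ↔ ∃ i : Fin k, v = .inl ⟨i.val + 1, by omega⟩ := by
  constructor
  · rintro ⟨x, y, hxy, hx, hy⟩
    match v with
    | .inl a =>
      by_cases ha : 1 ≤ a.val ∧ a.val ≤ k
      · exact ⟨⟨a.val - 1, by omega⟩, by congr 1; exact Fin.ext (by simp; omega)⟩
      · exfalso
        have key : ∀ z, (inducedCaterpillar s).Adj (.inl a) z →
            z = if a.val = 0 then .inl ⟨1, by omega⟩ else .inl ⟨k, by omega⟩ := by
          rintro (b | ⟨i', j'⟩) hz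
          · rw [adj_inl_inl] at hz
            have h1 := a.is_lt; have h2 := b.is_lt
            split <;> (congr 1; exact Fin.ext (by simp; omega))
          · rw [adj_inl_inr] at hz
            have := i'.is_lt
            split <;> (exfalso; omega)
        exact hxy ((key x hx).trans (key y hy).symm)
    | .inr ⟨i', j'⟩ =>
      exfalso
      have key : ∀ z, (inducedCaterpillar s).Adj (.inr ⟨i', j'⟩) z →
          z = .inl ⟨i'.val + 1, by omega⟩ := by
        rintro (b | w) hz
        · rw [SimpleGraph.adj_comm, adj_inl_inr] at hz
          exact congrArg Sum.inl (Fin.ext (by simpa using hz))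
        · exact absurd hz (adj_inr_inr _ _)
      exact hxy ((key x hx).trans (key y hy).symm)
  · rintro ⟨i, rfl⟩
    refine ⟨.inl ⟨i.val, by omega⟩, .inl ⟨i.val + 2, by omega⟩, by simp, ?_, ?_⟩ <;>
      (rw [adj_inl_inl]; simp)

private lemma path_bij (k : ℕ) (g : Fin k → Fin k) (hinj : Function.Injective g)
    (hadj : ∀ i j : Fin k, ((g i).val + 1 = (g j).val ∨ (g j).val + 1 = (g i).val) ↔
      (i.val + 1 = j.val ∨ j.val + 1 = i.val)) :
    (∀ i, (g i).val = i.val) ∨ (∀ i, (g i).val = k - 1 - i.val) := by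
  rcases Nat.eq_zero_or_pos k with rfl | hk
  · exact Or.inl (fun i => i.elim0)
  have hsurj : Function.Surjective g := (Finite.injective_iff_surjective.mp hinj)
  have step : ∀ n (hn : n + 1 < k), (g ⟨n + 1, hn⟩).val = (g ⟨n, by omega⟩).val + 1 ∨
      (g ⟨n, by omega⟩).val = (g ⟨n + 1, hn⟩).val + 1 := by
    intro n hn
    have := (hadj ⟨n, by omega⟩ ⟨n + 1, hn⟩).mpr (Or.inl (by simp))
    omega
  have h0 : (g ⟨0, hk⟩).val = 0 ∨ (g ⟨0, hk⟩).val = k - 1 := by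
    by_contra hc
    push_neg at hc
    set m := (g ⟨0, hk⟩).val with hm
    have hmlt : m < k := (g _).is_lt
    obtain ⟨p, hp⟩ := hsurj ⟨m - 1, by omega⟩
    obtain ⟨q, hq⟩ := hsurj ⟨m + 1, by omega⟩
    have hp1 : p.val = 1 := by
      have h2 := (hadj p ⟨0, hk⟩).mp (Or.inl (by rw [hp]; simp only [Fin.val_mk]; omega))
      simp only [Fin.val_mk] at h2
      omega
    have hq1 : q.val = 1 := by
      have h2 := (hadj ⟨0, hk⟩ q).mp (Or.inl (by rw [hq]))
      simp only [Fin.val_mk] at h2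
      omega
    have hpq : p = q := Fin.ext (by omega)
    rw [hpq, hq] at hp
    have h3 : m + 1 = m - 1 := by simpa using congrArg Fin.val hp
    omega
  rcases h0 with h0 | h0
  · left
    have main : ∀ n, ∀ hn : n < k, (g ⟨n, hn⟩).val = n := by
      intro n
      induction n using Nat.strong_induction_on with
      | _ n ih =>
        intro hn
        match n, hn with
        | 0, _ => exact h0
        | (m + 1), hn =>
          have ihm := ih m (by omega) (by omega)
          rcases step m hn with h | h
          · rw [ihm] at h; exact h
          · exfalso
            rw [ihm] at h
            match hm : m, hn, h with
            | 0, hn, h => omega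
            | (m' + 1), hn, h =>
              have ihm' := ih m' (by omega) (by omega)
              have he : g ⟨m' + 1 + 1, hn⟩ = g ⟨m', by omega⟩ := Fin.ext (by omega)
              have := congrArg Fin.val (hinj he)
              simp only [Fin.val_mk] at this
              omega
    exact fun i => main i.val i.is_lt
  · right
    have main : ∀ n, ∀ hn : n < k, (g ⟨n, hn⟩).val = k - 1 - n := by
      intro n
      induction n using Nat.strong_induction_on with
      | _ n ih =>
        intro hn
        match n, hn with
        | 0, _ => simpa using h0
        | (m + 1), hn =>
          have ihm := ih m (by omega) (by omega)
          rcases step m hn with h | h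
          · exfalso
            rw [ihm] at h
            match hm : m, hn, h with
            | 0, hn, h =>
              have := (g ⟨0 + 1, hn⟩).is_lt
              omega
            | (m' + 1), hn, h =>
              have ihm' := ih m' (by omega) (by omega)
              have he : g ⟨m' + 1 + 1, hn⟩ = g ⟨m', by omega⟩ := Fin.ext (by omega)
              have := congrArg Fin.val (hinj he)
              simp only [Fin.val_mk] at this
              omega
          · rw [ihm] at h
            omega
    exact fun i => main i.val i.is_lt

end Aux

/-- Two `k`-tuples of nonnegative integers induce isomorphic caterpillar trees if and
only if they are equal or one is the reversal of the other. -/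
theorem inducedCaterpillar_iso_iff (k : ℕ) (hk : 0 < k) (s t : Fin k → ℕ) :
    Nonempty (inducedCaterpillar s ≃g inducedCaterpillar t) ↔
      (t = s ∨ t = s ∘ Fin.rev) := by
  constructor
  · rintro ⟨f⟩
    have key : ∀ i : Fin k, ∃ j : Fin k,
        f (.inl ⟨i.val + 1, by omega⟩) = .inl ⟨j.val + 1, by omega⟩ := by
      intro i
      have h1 : TwoNbrs (inducedCaterpillar s) (.inl ⟨i.val + 1, by omega⟩) :=
        (twoNbrs_iff hk _).mpr ⟨i, rfl⟩
      have h2 : TwoNbrs (inducedCaterpillar t) (f (.inl ⟨i.val + 1, by omega⟩)) := by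
        obtain ⟨x, y, hxy, hx, hy⟩ := h1
        exact ⟨f x, f y, fun he => hxy (f.injective he),
          f.map_rel_iff.mpr hx, f.map_rel_iff.mpr hy⟩
      exact (twoNbrs_iff hk _).mp h2
    choose g hg using key
    have hginj : Function.Injective g := by
      intro a b hab
      have h1 : f (.inl ⟨a.val + 1, by omega⟩) = f (.inl ⟨b.val + 1, by omega⟩) := by
        rw [hg a, hg b, hab]
      have h2 := f.injective h1
      have h3 : a.val + 1 = b.val + 1 := by
        have := congrArg (fun x => x) h2
        injection h2 with h2
        exact congrArg Fin.val h2
      exact Fin.ext (by omega)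
    have hadj : ∀ i j : Fin k, ((g i).val + 1 = (g j).val ∨ (g j).val + 1 = (g i).val) ↔
        (i.val + 1 = j.val ∨ j.val + 1 = i.val) := by
      intro i j
      have h1 := f.map_rel_iff (a := Sum.inl ⟨i.val + 1, by omega⟩)
        (b := Sum.inl ⟨j.val + 1, by omega⟩)
      rw [hg i, hg j, adj_inl_inl, adj_inl_inl] at h1
      simp only [Fin.val_mk] at h1
      constructor
      · intro h; rcases (h1.mp (by omega)) with h' | h' <;> omega
      · intro h; rcases (h1.mpr (by omega)) with h' | h' <;> omega
    have hcard : ∀ i : Fin k, s i = t (g i) := by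
      intro i
      have h1 := card_nbr (s := s) i
      have h2 := card_nbr (s := t) (g i)
      have h3 : Nat.card ((inducedCaterpillar s).neighborSet (.inl ⟨i.val + 1, by omega⟩)) =
          Nat.card ((inducedCaterpillar t).neighborSet
            (.inl ⟨(g i).val + 1, by omega⟩)) := by
        rw [← hg i]
        exact Nat.card_congr (f.mapNeighborSet _)
      omega
    rcases path_bij k g hginj hadj with hid | hrev
    · left
      funext j
      have h1 := hcard j
      have h2 : g j = j := Fin.ext (hid j)
      rw [h2] at h1
      exact h1.symm
    · right
      funext j
      have h1 := hcard j.rev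
      have h2 : g j.rev = j := by
        refine Fin.ext ?_
        rw [hrev j.rev, Fin.val_rev]
        have := j.is_lt
        omega
      rw [h2] at h1
      exact h1.symm
  · rintro (rfl | rfl)
    · exact ⟨RelIso.refl _⟩
    · exact ⟨revIso s⟩
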